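/- arXiv:1503.01328 — 2 statements merged into one kernel-verified Lean document; each statement's English description precedes it below -/
import Mathlib

section
/- For every λ₃ ∈ ℝ, ∫_{-∞}^{λ₃} e^{-λ₂²/2} (λ₃-λ₂) ( ∫_{-∞}^{λ₂} e^{-λ₁²/2} (λ₂-λ₁)(λ₃-λ₁) dλ₁ ) dλ₂ = (2λ₃² - 1) G₁(λ₃) + e^{-λ₃²/2} G_{1/2}(λ₃) + λ₃ e^{-λ₃²}. -/
open MeasureTheory Real Filter Set Topology
/-- `G_γ(x) = ∫_{-∞}^x e^{-γ t²} dt`. -/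
noncomputable def Gint (γ x : ℝ) : ℝ := ∫ t in Set.Iic x, Real.exp (-γ * t ^ 2)

lemma expHalf (t : ℝ) : Real.exp (-(t^2)/2) = Real.exp (-(1/2:ℝ) * t^2) := by ring_nf

lemma integrable_poly_gauss {b : ℝ} (hb : 0 < b) (n : ℕ) :
    Integrable (fun t : ℝ => t ^ n * Real.exp (-b * t^2)) := by
  have hs : (-1:ℝ) < (n:ℝ) := lt_of_lt_of_le (by norm_num) (Nat.cast_nonneg n)
  simpa [Real.rpow_natCast] using integrable_rpow_mul_exp_neg_mul_sq hb hs

lemma gint_hasDerivAt {γ : ℝ} (hγ : 0 < γ) (x : ℝ) :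
    HasDerivAt (Gint γ) (Real.exp (-γ * x^2)) x := by
  have hint : Integrable (fun t:ℝ => Real.exp (-γ * t^2)) := integrable_exp_neg_mul_sq hγ
  have key : Gint γ = fun y => Gint γ 0 + ∫ t in (0:ℝ)..y, Real.exp (-γ*t^2) := by
    funext y
    have h := intervalIntegral.integral_Iic_sub_Iic (hint.integrableOn) (hint.integrableOn)
      (a := (0:ℝ)) (b := y)
    simp only [Gint]
    linarith [h]
  rw [key]
  have hc : Continuous (fun t:ℝ => Real.exp (-γ*t^2)) := by continuity
  exact (intervalIntegral.integral_hasDerivAt_right (hint.intervalIntegrable)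
    (hc.stronglyMeasurableAtFilter _ _) hc.continuousAt).const_add _

lemma gint_continuous {γ : ℝ} (hγ : 0 < γ) : Continuous (Gint γ) :=
  continuous_iff_continuousAt.2 fun x => (gint_hasDerivAt hγ x).continuousAt

lemma gint_nonneg (γ x : ℝ) : 0 ≤ Gint γ x :=
  setIntegral_nonneg measurableSet_Iic fun t _ => (Real.exp_pos _).le

lemma gint_bdd {γ : ℝ} (hγ : 0 < γ) (x : ℝ) : ‖Gint γ x‖ ≤ ∫ t : ℝ, Real.exp (-γ * t^2) := by
  rw [Real.norm_of_nonneg (gint_nonneg γ x)]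
  exact setIntegral_le_integral (integrable_exp_neg_mul_sq hγ)
    (ae_of_all _ fun t => (Real.exp_pos _).le)

lemma gint_tendsto {γ : ℝ} (hγ : 0 < γ) : Tendsto (Gint γ) atBot (𝓝 0) := by
  have hint : Integrable (fun t:ℝ => Real.exp (-γ * t^2)) := integrable_exp_neg_mul_sq hγ
  have h := intervalIntegral_tendsto_integral_Iic (0:ℝ) hint.integrableOn tendsto_id
  have h2 : Tendsto (fun y => Gint γ 0 - ∫ t in y..(0:ℝ), Real.exp (-γ*t^2)) atBot
      (𝓝 (Gint γ 0 - ∫ t in Iic (0:ℝ), Real.exp (-γ*t^2))) := tendsto_const_nhds.sub h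
  have h3 : Gint γ 0 - ∫ t in Iic (0:ℝ), Real.exp (-γ*t^2) = 0 := by simp [Gint]
  rw [h3] at h2
  refine h2.congr fun y => ?_
  have h4 := intervalIntegral.integral_Iic_sub_Iic (hint.integrableOn) (hint.integrableOn)
      (a := y) (b := (0:ℝ))
  simp only [Gint]
  linarith [h4]

lemma tendsto_exp_gauss {b : ℝ} (hb : 0 < b) :
    Tendsto (fun s : ℝ => Real.exp (-b*s^2)) atBot (𝓝 0) := by
  have h := (tendsto_rpow_abs_mul_exp_neg_mul_sq_cocompact hb 0).mono_left
    _root_.atBot_le_cocompact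
  simpa using h

lemma tendsto_id_mul_exp_gauss {b : ℝ} (hb : 0 < b) :
    Tendsto (fun s : ℝ => s * Real.exp (-b*s^2)) atBot (𝓝 0) := by
  have h := (tendsto_rpow_abs_mul_exp_neg_mul_sq_cocompact hb 1).mono_left
    _root_.atBot_le_cocompact
  rw [tendsto_zero_iff_norm_tendsto_zero]
  refine h.congr fun s => ?_
  rw [Real.rpow_one, Real.norm_eq_abs, abs_mul, Real.abs_exp]

lemma hexp_deriv {b : ℝ} (t : ℝ) :
    HasDerivAt (fun t : ℝ => Real.exp (-b*t^2)) (-2*b*t * Real.exp (-b*t^2)) t := by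
  have h1 : HasDerivAt (fun t:ℝ => -b*t^2) (-2*b*t) t := by
    have := (hasDerivAt_pow 2 t).const_mul (-b)
    refine this.congr_deriv ?_
    ring
  simpa [mul_comm] using h1.exp

lemma inner_id (l3 x : ℝ) :
    (∫ l1 in Set.Iic x, Real.exp (-(l1 ^ 2) / 2) * (x - l1) * (l3 - l1)) =
      (1 + x*l3) * Gint (1/2) x + l3 * Real.exp (-(x^2)/2) := by
  set φ : ℝ → ℝ := fun t => (1 + x*l3) * Gint (1/2) t + (x + l3) * Real.exp (-(1/2:ℝ)*t^2)
      - t * Real.exp (-(1/2:ℝ)*t^2) with hφdef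
  have hderiv : ∀ t : ℝ, HasDerivAt φ (Real.exp (-(t ^ 2) / 2) * (x - t) * (l3 - t)) t := by
    intro t
    have h1 := ((gint_hasDerivAt one_half_pos t).const_mul (1 + x*l3)).add
      ((hexp_deriv (b := (1/2:ℝ)) t).const_mul (x + l3))
    have h2 := (hasDerivAt_id t).mul (hexp_deriv (b := (1/2:ℝ)) t)
    have h := h1.sub h2
    refine h.congr_deriv ?_
    simp only [id_eq]
    rw [expHalf]
    ring
  have hint : Integrable (fun t : ℝ => Real.exp (-(t ^ 2) / 2) * (x - t) * (l3 - t)) := by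
    have h := (((integrable_poly_gauss one_half_pos 0).const_mul (x*l3)).sub
        ((integrable_poly_gauss one_half_pos 1).const_mul (x+l3))).add
        (integrable_poly_gauss one_half_pos 2)
    refine h.congr (ae_of_all _ fun t => ?_)
    simp only [Pi.add_apply, Pi.sub_apply]
    rw [expHalf]
    ring
  have htend : Tendsto φ atBot (𝓝 0) := by
    have h := (((gint_tendsto one_half_pos).const_mul (1 + x*l3)).add
      ((tendsto_exp_gauss one_half_pos).const_mul (x + l3))).sub
      (tendsto_id_mul_exp_gauss one_half_pos)
    rw [show (0:ℝ) = (1 + x*l3)*0 + (x + l3)*0 - 0 by ring]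
    exact h
  have key := integral_Iic_of_hasDerivAt_of_tendsto' (a := x) (fun t _ => hderiv t)
    hint.integrableOn htend
  rw [key]
  simp only [hφdef]
  rw [expHalf]
  ring

theorem stmt2 (l3 : ℝ) :
    (∫ l2 in Set.Iic l3, Real.exp (-(l2 ^ 2) / 2) * (l3 - l2) *
        ∫ l1 in Set.Iic l2, Real.exp (-(l1 ^ 2) / 2) * (l2 - l1) * (l3 - l1)) =
      (2 * l3 ^ 2 - 1) * Gint 1 l3 + Real.exp (-(l3 ^ 2) / 2) * Gint (1 / 2) l3 +
        l3 * Real.exp (-(l3 ^ 2)) := by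
  have hE : ∀ s : ℝ, Real.exp (-(1:ℝ)*s^2)
      = Real.exp (-(1/2:ℝ)*s^2) * Real.exp (-(1/2:ℝ)*s^2) := by
    intro s; rw [← Real.exp_add]; ring_nf
  set Ψ : ℝ → ℝ := fun s => (2*l3^2-1) * Gint 1 s
      + (1 - l3^2 + l3*s) * Real.exp (-(1/2:ℝ)*s^2) * Gint (1/2) s
      + l3 * Real.exp (-(1:ℝ)*s^2) with hΨdef
  have hderiv : ∀ s : ℝ, HasDerivAt Ψ
      (Real.exp (-(s ^ 2) / 2) * (l3 - s) *
        ((1 + s*l3) * Gint (1/2) s + l3 * Real.exp (-(s^2)/2))) s := by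
    intro s
    have hpoly : HasDerivAt (fun s : ℝ => 1 - l3^2 + l3*s) l3 s := by
      simpa using ((hasDerivAt_id s).const_mul l3).const_add (1 - l3^2)
    have h1 := (gint_hasDerivAt one_pos s).const_mul (2*l3^2-1)
    have h2 := (hpoly.mul (hexp_deriv (b := (1/2:ℝ)) s)).mul (gint_hasDerivAt one_half_pos s)
    have h3 := (hexp_deriv (b := (1:ℝ)) s).const_mul l3
    have h := (h1.add h2).add h3
    refine h.congr_deriv ?_
    simp only [Pi.mul_apply]
    rw [expHalf, hE]
    ring
  have hq : Integrable (fun s : ℝ =>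
      Gint (1/2) s * (Real.exp (-(1/2:ℝ)*s^2) * ((l3-s)*(1+s*l3)))) := by
    have hg : Integrable (fun s : ℝ => Real.exp (-(1/2:ℝ)*s^2) * ((l3-s)*(1+s*l3))) := by
      have h := (((integrable_poly_gauss one_half_pos 0).const_mul l3).add
          ((integrable_poly_gauss one_half_pos 1).const_mul (l3^2-1))).sub
          ((integrable_poly_gauss one_half_pos 2).const_mul l3)
      refine h.congr (ae_of_all _ fun t => ?_)
      simp only [Pi.add_apply, Pi.sub_apply]
      ring
    exact hg.bdd_mul ((gint_continuous one_half_pos).aestronglyMeasurable)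
      (ae_of_all _ fun x => gint_bdd one_half_pos x)
  have hint : Integrable (fun s : ℝ => Real.exp (-(s ^ 2) / 2) * (l3 - s) *
      ((1 + s*l3) * Gint (1/2) s + l3 * Real.exp (-(s^2)/2))) := by
    have h2 := ((integrable_poly_gauss one_pos 0).const_mul (l3^2)).sub
        ((integrable_poly_gauss one_pos 1).const_mul l3)
    refine (hq.add h2).congr (ae_of_all _ fun s => ?_)
    simp only [Pi.add_apply, Pi.sub_apply]
    rw [expHalf, hE]
    ring
  have htend : Tendsto Ψ atBot (𝓝 0) := by
    have h1 := (gint_tendsto one_pos).const_mul (2*l3^2-1)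
    have hfac : Tendsto (fun s : ℝ => (1 - l3^2 + l3*s) * Real.exp (-(1/2:ℝ)*s^2)) atBot
        (𝓝 ((1-l3^2)*0 + l3*0)) := by
      refine (((tendsto_exp_gauss one_half_pos).const_mul (1-l3^2)).add
        ((tendsto_id_mul_exp_gauss one_half_pos).const_mul l3)).congr fun s => ?_
      ring
    have h2 := hfac.mul (gint_tendsto one_half_pos)
    have h3 := (tendsto_exp_gauss one_pos).const_mul l3
    have h := (h1.add h2).add h3
    rw [show (0:ℝ) = ((2*l3^2-1)*0 + ((1-l3^2)*0 + l3*0)*0) + l3*0 by ring]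
    exact h
  have key := integral_Iic_of_hasDerivAt_of_tendsto' (a := l3) (fun s _ => hderiv s)
    hint.integrableOn htend
  simp only [inner_id l3]
  rw [key]
  simp only [hΨdef]
  rw [expHalf l3, show Real.exp (-(l3^2):ℝ) = Real.exp (-(1:ℝ)*l3^2) by ring_nf]
  ring
end

section
/- For all real constants a > 0 and b ∈ ℝ, (1/(2√π)) ∫_{λ₁≤λ₂} e^{-λ₁²/2} e^{-a(λ₂-b)²} (λ₂-λ₁) dλ₁ dλ₂ = (√(4a+2)/(4a)) e^{-a b²/(2a+1)} + (b√π/√(2a)) Φ( b√(2a)/√(2a+1) ). -/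
open MeasureTheory Real Filter Set

/-- Standard normal cumulative distribution function. -/
noncomputable def Phi (x : ℝ) : ℝ :=
  ∫ t in Set.Iic x, (Real.sqrt (2 * Real.pi))⁻¹ * Real.exp (-(t ^ 2) / 2)


lemma g_eq (t : ℝ) : Real.exp (-(t ^ 2) / 2) = Real.exp (-(1/2 : ℝ) * t ^ 2) := by ring_nf

lemma integrable_g : Integrable (fun t : ℝ => Real.exp (-(t ^ 2) / 2)) := by
  simp_rw [g_eq]; exact integrable_exp_neg_mul_sq (by norm_num)

lemma integrable_tg : Integrable (fun t : ℝ => t * Real.exp (-(t ^ 2) / 2)) := by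
  simp_rw [g_eq]; exact integrable_mul_exp_neg_mul_sq (by norm_num)

lemma int_g : ∫ t : ℝ, Real.exp (-(t ^ 2) / 2) = Real.sqrt (2 * Real.pi) := by
  simp_rw [g_eq]
  rw [integral_gaussian]
  rw [show Real.pi / (1/2) = 2 * Real.pi by ring]

lemma Phi_eq (x : ℝ) :
    Phi x = (Real.sqrt (2 * Real.pi))⁻¹ * ∫ t in Set.Iic x, Real.exp (-(t ^ 2) / 2) := by
  rw [Phi, MeasureTheory.integral_const_mul]

lemma Iic_g (x : ℝ) :
    ∫ t in Set.Iic x, Real.exp (-(t ^ 2) / 2) = Real.sqrt (2 * Real.pi) * Phi x := by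
  rw [Phi_eq, ← mul_assoc, mul_inv_cancel₀ (Real.sqrt_ne_zero'.mpr (by positivity)), one_mul]

lemma tendsto_g_atBot : Filter.Tendsto (fun t : ℝ => Real.exp (-(t ^ 2) / 2)) atBot (nhds 0) := by
  have h1 : Filter.Tendsto (fun t : ℝ => -(t ^ 2) / 2) atBot atBot := by
    have hle : (fun t : ℝ => -(t ^ 2) / 2) ≤ᶠ[atBot] id := by
      filter_upwards [eventually_le_atBot (-2 : ℝ)] with t ht
      simp only [id]
      nlinarith
    exact tendsto_atBot_mono' atBot hle tendsto_id
  have := Real.tendsto_exp_atBot.comp h1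
  simpa [Function.comp_def] using this

lemma Iic_tg (x : ℝ) :
    ∫ t in Set.Iic x, t * Real.exp (-(t ^ 2) / 2) = -Real.exp (-(x ^ 2) / 2) := by
  have h : ∀ y ∈ Set.Iic x, HasDerivAt (fun t : ℝ => -Real.exp (-(t ^ 2) / 2))
      (y * Real.exp (-(y ^ 2) / 2)) y := by
    intro y _
    have h1 : HasDerivAt (fun t : ℝ => -(t ^ 2) / 2) (-y) y := by
      have := ((hasDerivAt_pow 2 y).neg).div_const 2
      exact this.congr_deriv (by norm_num <;> ring)
    have := (h1.exp).neg
    exact this.congr_deriv (by ring)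
  have := MeasureTheory.integral_Iic_of_hasDerivAt_of_tendsto' h
    (integrable_tg.integrableOn) (by simpa using tendsto_g_atBot.neg)
  simpa using this



lemma integrable_phi : Integrable (fun t : ℝ =>
    (Real.sqrt (2 * Real.pi))⁻¹ * Real.exp (-(t ^ 2) / 2)) :=
  integrable_g.const_mul _

lemma continuous_phi : Continuous (fun t : ℝ =>
    (Real.sqrt (2 * Real.pi))⁻¹ * Real.exp (-(t ^ 2) / 2)) := by
  continuity

lemma Phi_nonneg (x : ℝ) : 0 ≤ Phi x := by
  rw [Phi]
  apply integral_nonneg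
  intro t
  positivity

lemma Phi_le_one (x : ℝ) : Phi x ≤ 1 := by
  have h := setIntegral_le_integral (μ := volume) (s := Set.Iic x) integrable_phi
    (Filter.Eventually.of_forall (fun t => by positivity))
  rw [Phi]
  refine h.trans ?_
  rw [MeasureTheory.integral_const_mul, int_g, inv_mul_cancel₀ (Real.sqrt_ne_zero'.mpr (by positivity))]

lemma hasDerivAt_Phi (x : ℝ) :
    HasDerivAt Phi ((Real.sqrt (2 * Real.pi))⁻¹ * Real.exp (-(x ^ 2) / 2)) x := by
  set f : ℝ → ℝ := fun t => (Real.sqrt (2 * Real.pi))⁻¹ * Real.exp (-(t ^ 2) / 2) with hf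
  have heq : ∀ y : ℝ, Phi y = Phi 0 + ∫ t in (0:ℝ)..y, f t := by
    intro y
    rw [Phi, Phi, eq_comm, add_comm]
    rw [← intervalIntegral.integral_Iic_sub_Iic integrable_phi.integrableOn
      integrable_phi.integrableOn]
    ring
  have h1 : HasDerivAt (fun y => ∫ t in (0:ℝ)..y, f t) (f x) x := by
    apply intervalIntegral.integral_hasDerivAt_right
      (integrable_phi.intervalIntegrable)
      (continuous_phi.stronglyMeasurableAtFilter _ _)
      continuous_phi.continuousAt
  have h2 := h1.const_add (Phi 0)
  exact h2.congr_of_eventuallyEq (Filter.Eventually.of_forall heq)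

lemma continuous_Phi : Continuous Phi :=
  continuous_iff_continuousAt.mpr fun x => (hasDerivAt_Phi x).continuousAt

lemma tendsto_Phi_atBot : Filter.Tendsto Phi atBot (nhds 0) := by
  have h : Filter.Tendsto (fun x : ℝ => ∫ t : ℝ, Set.indicator (Set.Iic x)
      (fun t => (Real.sqrt (2 * Real.pi))⁻¹ * Real.exp (-(t ^ 2) / 2)) t) atBot (nhds 0) := by
    have := MeasureTheory.tendsto_integral_filter_of_dominated_convergence
      (μ := volume) (F := fun (x : ℝ) (t : ℝ) => Set.indicator (Set.Iic x)
        (fun t => (Real.sqrt (2 * Real.pi))⁻¹ * Real.exp (-(t ^ 2) / 2)) t)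
      (f := fun _ : ℝ => (0:ℝ))
      (bound := fun t => (Real.sqrt (2 * Real.pi))⁻¹ * Real.exp (-(t ^ 2) / 2))
      (l := atBot)
      (Filter.Eventually.of_forall fun x =>
        (integrable_phi.aestronglyMeasurable).indicator measurableSet_Iic)
      (Filter.Eventually.of_forall fun x => Filter.Eventually.of_forall fun t => by
        rw [Real.norm_eq_abs, abs_of_nonneg (Set.indicator_nonneg (fun t _ => by positivity) t)]
        exact Set.indicator_le_self' (fun t _ => by positivity) t)
      integrable_phi
      (Filter.Eventually.of_forall fun t => by
        have : ∀ᶠ x in (atBot : Filter ℝ), Set.indicator (Set.Iic x)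
            (fun t => (Real.sqrt (2 * Real.pi))⁻¹ * Real.exp (-(t ^ 2) / 2)) t = 0 := by
          filter_upwards [eventually_lt_atBot t] with x hx
          exact Set.indicator_of_notMem (by simpa using hx.not_ge) _
        exact Filter.Tendsto.congr' (Filter.EventuallyEq.symm this) tendsto_const_nhds)
    simpa using this
  refine h.congr fun x => ?_
  rw [Phi, MeasureTheory.integral_indicator measurableSet_Iic]



lemma gauss_shift {c : ℝ} (hc : 0 < c) (d : ℝ) :
    ∫ x : ℝ, Real.exp (-c * (x - d) ^ 2) = Real.sqrt (Real.pi / c) := by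
  rw [show (fun x : ℝ => Real.exp (-c * (x - d) ^ 2)) =
    (fun x : ℝ => (fun u : ℝ => Real.exp (-c * u ^ 2)) (x - d)) from rfl]
  rw [integral_sub_right_eq_self (fun u : ℝ => Real.exp (-c * u ^ 2)) d]
  exact integral_gaussian c

lemma integrable_gauss_shift {c : ℝ} (hc : 0 < c) (d : ℝ) :
    Integrable (fun x : ℝ => Real.exp (-c * (x - d) ^ 2)) :=
  (integrable_exp_neg_mul_sq hc).comp_sub_right d

lemma integrable_mul_gauss_shift {c : ℝ} (hc : 0 < c) (d : ℝ) :
    Integrable (fun x : ℝ => (x - d) * Real.exp (-c * (x - d) ^ 2)) :=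
  (integrable_mul_exp_neg_mul_sq hc).comp_sub_right d

lemma gauss_prod {a : ℝ} (ha : 0 < a) (b : ℝ) :
    ∫ y : ℝ, Real.exp (-(y ^ 2) / 2) * Real.exp (-a * (y - b) ^ 2) =
      Real.sqrt (2 * Real.pi / (2 * a + 1)) * Real.exp (-a * b ^ 2 / (2 * a + 1)) := by
  have h21 : (2 * a + 1) ≠ 0 := by positivity
  have hpt : ∀ y : ℝ, Real.exp (-(y ^ 2) / 2) * Real.exp (-a * (y - b) ^ 2) =
      Real.exp (-a * b ^ 2 / (2 * a + 1)) *
        Real.exp (-((2 * a + 1) / 2) * (y - 2 * a * b / (2 * a + 1)) ^ 2) := by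
    intro y
    rw [← Real.exp_add, ← Real.exp_add]
    congr 1
    field_simp
    ring
  simp_rw [hpt]
  rw [MeasureTheory.integral_const_mul, gauss_shift (by positivity) _]
  rw [mul_comm]
  congr 1
  rw [div_div_eq_mul_div, mul_comm Real.pi 2]

lemma integrable_gauss_prod {a : ℝ} (ha : 0 < a) (b : ℝ) :
    Integrable (fun y : ℝ => Real.exp (-(y ^ 2) / 2) * Real.exp (-a * (y - b) ^ 2)) := by
  apply Integrable.mono (integrable_g) ?_ ?_
  · exact (Real.continuous_exp.comp (by continuity)).aestronglyMeasurable.mul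
      (Real.continuous_exp.comp (by continuity)).aestronglyMeasurable
  · refine Filter.Eventually.of_forall fun y => ?_
    rw [Real.norm_eq_abs, Real.norm_eq_abs, abs_of_nonneg (by positivity),
      abs_of_nonneg (by positivity)]
    nlinarith [Real.exp_pos (-(y^2)/2), Real.exp_le_one_iff.mpr
      (by nlinarith [sq_nonneg (y - b)] : -a * (y - b)^2 ≤ 0), Real.exp_pos (-a*(y-b)^2)]

lemma inner_int (y C : ℝ) :
    ∫ t in Set.Iic y, Real.exp (-(t ^ 2) / 2) * C * (y - t) =
      C * (y * (Real.sqrt (2 * Real.pi) * Phi y) + Real.exp (-(y ^ 2) / 2)) := by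
  have h1 : ∀ t : ℝ, Real.exp (-(t ^ 2) / 2) * C * (y - t) =
      C * (y * Real.exp (-(t ^ 2) / 2) - t * Real.exp (-(t ^ 2) / 2)) := by intro t; ring
  simp_rw [h1]
  rw [MeasureTheory.integral_const_mul]
  congr 1
  rw [MeasureTheory.integral_sub ((integrable_g.integrableOn).const_mul y)
    (integrable_tg.integrableOn), MeasureTheory.integral_const_mul, Iic_g, Iic_tg]
  ring



lemma integrable_F {a : ℝ} (ha : 0 < a) (b : ℝ) :
    Integrable (fun y : ℝ => Phi (y + b) * Real.exp (-a * y ^ 2)) := by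
  apply Integrable.mono (integrable_exp_neg_mul_sq ha)
  · exact ((continuous_Phi.comp (by continuity)).mul (by continuity)).aestronglyMeasurable
  · refine Filter.Eventually.of_forall fun y => ?_
    rw [Real.norm_eq_abs, Real.norm_eq_abs,
      abs_of_nonneg (mul_nonneg (Phi_nonneg _) (by positivity)), abs_of_nonneg (by positivity)]
    nlinarith [Phi_nonneg (y + b), Phi_le_one (y + b), Real.exp_pos (-a * y ^ 2)]

lemma deriv_integrand_eq {a : ℝ} (ha : 0 < a) (b : ℝ) :
    ∫ y : ℝ, ((Real.sqrt (2 * Real.pi))⁻¹ * Real.exp (-((y + b) ^ 2) / 2)) *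
        Real.exp (-a * y ^ 2) =
      (Real.sqrt (2 * a + 1))⁻¹ * Real.exp (-a * b ^ 2 / (2 * a + 1)) := by
  have key : ∀ y : ℝ, ((Real.sqrt (2 * Real.pi))⁻¹ * Real.exp (-((y + b) ^ 2) / 2)) *
      Real.exp (-a * y ^ 2) = (Real.sqrt (2 * Real.pi))⁻¹ *
        ((fun u : ℝ => Real.exp (-(u ^ 2) / 2) * Real.exp (-a * (u - b) ^ 2)) (y + b)) := by
    intro y
    simp only []
    rw [add_sub_cancel_right]
    ring
  simp_rw [key]
  rw [MeasureTheory.integral_const_mul,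
    integral_add_right_eq_self (fun u : ℝ => Real.exp (-(u ^ 2) / 2) *
      Real.exp (-a * (u - b) ^ 2)) b, gauss_prod ha b]
  have h1 : Real.sqrt (2 * Real.pi / (2 * a + 1)) =
      Real.sqrt (2 * Real.pi) / Real.sqrt (2 * a + 1) :=
    Real.sqrt_div (by positivity) _
  rw [h1, ← mul_assoc]
  congr 1
  have h2 : Real.sqrt (2 * Real.pi) ≠ 0 := by positivity
  field_simp

lemma hasDerivAt_F {a : ℝ} (ha : 0 < a) (b : ℝ) :
    HasDerivAt (fun b : ℝ => ∫ y : ℝ, Phi (y + b) * Real.exp (-a * y ^ 2))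
      ((Real.sqrt (2 * a + 1))⁻¹ * Real.exp (-a * b ^ 2 / (2 * a + 1))) b := by
  rw [← deriv_integrand_eq ha b]
  have := hasDerivAt_integral_of_dominated_loc_of_deriv_le (μ := volume)
    (F := fun (x : ℝ) (y : ℝ) => Phi (y + x) * Real.exp (-a * y ^ 2))
    (F' := fun (x : ℝ) (y : ℝ) => ((Real.sqrt (2 * Real.pi))⁻¹ *
      Real.exp (-((y + x) ^ 2) / 2)) * Real.exp (-a * y ^ 2))
    (x₀ := b)
    (bound := fun y => (Real.sqrt (2 * Real.pi))⁻¹ * Real.exp (-a * y ^ 2))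
    (s := Metric.ball b 1) (Metric.ball_mem_nhds b one_pos)
    (Filter.Eventually.of_forall fun x =>
      ((continuous_Phi.comp (by continuity)).mul (by continuity)).aestronglyMeasurable)
    (integrable_F ha b)
    ((by continuity : Continuous fun y : ℝ => ((Real.sqrt (2 * Real.pi))⁻¹ *
      Real.exp (-((y + b) ^ 2) / 2)) * Real.exp (-a * y ^ 2)).aestronglyMeasurable)
    (Filter.Eventually.of_forall fun y => fun x _ => by
      show ‖((Real.sqrt (2 * Real.pi))⁻¹ * Real.exp (-((y + x) ^ 2) / 2)) *
        Real.exp (-a * y ^ 2)‖ ≤ (Real.sqrt (2 * Real.pi))⁻¹ * Real.exp (-a * y ^ 2)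
      rw [Real.norm_eq_abs, abs_of_nonneg (by positivity)]
      have h2 : Real.exp (-((y + x) ^ 2) / 2) ≤ 1 :=
        Real.exp_le_one_iff.mpr (by nlinarith [sq_nonneg (y + x)])
      have h3 : (0:ℝ) < Real.sqrt (2 * Real.pi) := by positivity
      nlinarith [mul_nonneg (mul_nonneg (inv_pos.mpr h3).le
        (Real.exp_pos (-a * y ^ 2)).le) (sub_nonneg.mpr h2)])
    ((integrable_exp_neg_mul_sq ha).const_mul _)
    (Filter.Eventually.of_forall fun y => fun x _ => by
      have h1 : HasDerivAt (fun x : ℝ => Phi (y + x))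
          ((Real.sqrt (2 * Real.pi))⁻¹ * Real.exp (-((y + x) ^ 2) / 2)) x := by
        have := HasDerivAt.comp x (hasDerivAt_Phi (y + x))
          ((hasDerivAt_id x).const_add y)
        simpa [Function.comp_def] using this
      exact h1.mul_const _)
  exact this.2

lemma tendsto_F_atBot {a : ℝ} (ha : 0 < a) :
    Filter.Tendsto (fun b : ℝ => ∫ y : ℝ, Phi (y + b) * Real.exp (-a * y ^ 2))
      atBot (nhds 0) := by
  have := MeasureTheory.tendsto_integral_filter_of_dominated_convergence
    (μ := volume) (F := fun (b : ℝ) (y : ℝ) => Phi (y + b) * Real.exp (-a * y ^ 2))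
    (f := fun _ : ℝ => (0:ℝ)) (bound := fun y => Real.exp (-a * y ^ 2)) (l := atBot)
    (Filter.Eventually.of_forall fun b =>
      ((continuous_Phi.comp (by continuity)).mul (by continuity)).aestronglyMeasurable)
    (Filter.Eventually.of_forall fun b => Filter.Eventually.of_forall fun y => by
      rw [Real.norm_eq_abs, abs_of_nonneg (mul_nonneg (Phi_nonneg _) (by positivity))]
      nlinarith [Phi_nonneg (y + b), Phi_le_one (y + b), Real.exp_pos (-a * y ^ 2)])
    (integrable_exp_neg_mul_sq ha)
    (Filter.Eventually.of_forall fun y => by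
      have h1 : Filter.Tendsto (fun b : ℝ => y + b) atBot atBot :=
        tendsto_atBot_add_const_left atBot y tendsto_id
      have h2 := (tendsto_Phi_atBot.comp h1).mul_const (Real.exp (-a * y ^ 2))
      simpa using h2)
  simpa using this

lemma F_eq {a : ℝ} (ha : 0 < a) (b : ℝ) :
    ∫ y : ℝ, Phi (y + b) * Real.exp (-a * y ^ 2) =
      Real.sqrt (Real.pi / a) *
        Phi (b * (Real.sqrt (2 * a) / Real.sqrt (2 * a + 1))) := by
  set k : ℝ := Real.sqrt (2 * a) / Real.sqrt (2 * a + 1) with hk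
  have hkpos : 0 < k := by positivity
  have hkexp : ∀ x : ℝ, Real.exp (-((x * k) ^ 2) / 2) =
      Real.exp (-a * x ^ 2 / (2 * a + 1)) := by
    intro x
    congr 1
    rw [mul_pow, hk, div_pow, Real.sq_sqrt (by positivity : (0:ℝ) ≤ 2 * a),
      Real.sq_sqrt (by positivity : (0:ℝ) ≤ 2 * a + 1)]
    have h21 : (2 * a + 1) ≠ 0 := by positivity
    field_simp
  have hcoef : Real.sqrt (Real.pi / a) * ((Real.sqrt (2 * Real.pi))⁻¹ * k) =
      (Real.sqrt (2 * a + 1))⁻¹ := by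
    rw [hk, Real.sqrt_div Real.pi_pos.le, Real.sqrt_mul (by norm_num : (0:ℝ) ≤ 2),
      Real.sqrt_mul (by norm_num : (0:ℝ) ≤ 2)]
    have h1 : Real.sqrt Real.pi ≠ 0 := by positivity
    have h2 : Real.sqrt a ≠ 0 := by positivity
    have h3 : Real.sqrt 2 ≠ 0 := by positivity
    have h4 : Real.sqrt (2 * a + 1) ≠ 0 := by positivity
    field_simp
  have hRderiv : ∀ x : ℝ, HasDerivAt (fun b : ℝ => Real.sqrt (Real.pi / a) * Phi (b * k))
      ((Real.sqrt (2 * a + 1))⁻¹ * Real.exp (-a * x ^ 2 / (2 * a + 1))) x := by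
    intro x
    have h1 : HasDerivAt (fun b : ℝ => Phi (b * k))
        (((Real.sqrt (2 * Real.pi))⁻¹ * Real.exp (-((x * k) ^ 2) / 2)) * k) x := by
      have := HasDerivAt.comp x (hasDerivAt_Phi (x * k)) (hasDerivAt_mul_const k)
      simpa [Function.comp_def] using this
    have h2 := h1.const_mul (Real.sqrt (Real.pi / a))
    have h3 : Real.sqrt (Real.pi / a) * (((Real.sqrt (2 * Real.pi))⁻¹ *
        Real.exp (-((x * k) ^ 2) / 2)) * k) =
        (Real.sqrt (2 * a + 1))⁻¹ * Real.exp (-a * x ^ 2 / (2 * a + 1)) := by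
      rw [hkexp x, ← hcoef]
      ring
    rw [← h3]
    exact h2
  set G : ℝ → ℝ := fun b => (∫ y : ℝ, Phi (y + b) * Real.exp (-a * y ^ 2)) -
    Real.sqrt (Real.pi / a) * Phi (b * k) with hG
  have hG' : ∀ x : ℝ, HasDerivAt G 0 x := by
    intro x
    have h := (hasDerivAt_F ha x).sub (hRderiv x)
    rw [sub_self] at h
    exact h
  have hconst : ∀ x : ℝ, G x = G 0 := fun x =>
    is_const_of_deriv_eq_zero (fun y => (hG' y).differentiableAt)
      (fun y => (hG' y).deriv) x 0
  have hlim : Filter.Tendsto G atBot (nhds 0) := by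
    have h1 : Filter.Tendsto (fun b : ℝ => b * k) atBot atBot :=
      Filter.Tendsto.atBot_mul_const hkpos tendsto_id
    have h2 := (tendsto_Phi_atBot.comp h1).const_mul (Real.sqrt (Real.pi / a))
    rw [show (0:ℝ) = 0 - Real.sqrt (Real.pi / a) * 0 by ring]
    exact (tendsto_F_atBot ha).sub h2
  have hG0 : G 0 = 0 := by
    have hGc : Filter.Tendsto G atBot (nhds (G 0)) :=
      Filter.Tendsto.congr (fun x => (hconst x).symm) tendsto_const_nhds
    exact tendsto_nhds_unique hGc hlim
  have := (hconst b).trans hG0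
  rw [hG] at this
  linarith [this]

lemma F_shift {a : ℝ} (ha : 0 < a) (b : ℝ) :
    ∫ y : ℝ, Phi y * Real.exp (-a * (y - b) ^ 2) =
      ∫ y : ℝ, Phi (y + b) * Real.exp (-a * y ^ 2) := by
  rw [← integral_add_right_eq_self (fun y : ℝ => Phi y * Real.exp (-a * (y - b) ^ 2)) b]
  congr 1
  funext y
  simp only [add_sub_cancel_right]



lemma tendsto_sq_abs_atTop : Filter.Tendsto (fun y : ℝ => y ^ 2) (atBot ⊔ atTop) atTop := by
  rw [Filter.tendsto_sup]
  constructor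
  · have := (tendsto_pow_atTop (n := 2) two_ne_zero).comp
      (tendsto_neg_atBot_atTop : Filter.Tendsto (fun y : ℝ => -y) atBot atTop)
    simpa [Function.comp_def, neg_pow] using this
  · exact tendsto_pow_atTop two_ne_zero

lemma tendsto_gauss_shift {c : ℝ} (hc : 0 < c) (d : ℝ) :
    Filter.Tendsto (fun y : ℝ => Real.exp (-c * (y - d) ^ 2)) (atBot ⊔ atTop) (nhds 0) := by
  apply Real.tendsto_exp_atBot.comp
  have h1 : Filter.Tendsto (fun y : ℝ => y - d) (atBot ⊔ atTop) (atBot ⊔ atTop) := by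
    rw [Filter.tendsto_sup]
    constructor
    · exact (tendsto_atBot_add_const_right atBot (-d) tendsto_id).mono_right le_sup_left
    · exact (tendsto_atTop_add_const_right atTop (-d) tendsto_id).mono_right le_sup_right
  have h2 : Filter.Tendsto (fun u : ℝ => -c * u) atTop atBot :=
    tendsto_id.const_mul_atTop_of_neg (by linarith)
  have h3 := h2.comp (tendsto_sq_abs_atTop.comp h1)
  simpa [Function.comp_def] using h3

lemma parts {a : ℝ} (ha : 0 < a) (b : ℝ) :
    ∫ y : ℝ, Phi y * ((y - b) * Real.exp (-a * (y - b) ^ 2)) =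
      (1 / (2 * a)) * ∫ y : ℝ, ((Real.sqrt (2 * Real.pi))⁻¹ * Real.exp (-(y ^ 2) / 2)) *
        Real.exp (-a * (y - b) ^ 2) := by
  have ha' : (2 * a) ≠ 0 := by positivity
  set H : ℝ → ℝ := fun y => Phi y * (-(1 / (2 * a)) * Real.exp (-a * (y - b) ^ 2)) with hHdef
  set H' : ℝ → ℝ := fun y =>
    ((Real.sqrt (2 * Real.pi))⁻¹ * Real.exp (-(y ^ 2) / 2)) *
      (-(1 / (2 * a)) * Real.exp (-a * (y - b) ^ 2)) +
    Phi y * ((y - b) * Real.exp (-a * (y - b) ^ 2)) with hH'def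
  have hH : ∀ y : ℝ, HasDerivAt H (H' y) y := by
    intro y
    have h1 : HasDerivAt (fun y : ℝ => -a * (y - b) ^ 2) (-a * (2 * (y - b))) y := by
      have := (((hasDerivAt_id y).sub_const b).pow 2).const_mul (-a)
      exact this.congr_deriv (by norm_num)
    have h2 : HasDerivAt (fun y : ℝ => -(1 / (2 * a)) * Real.exp (-a * (y - b) ^ 2))
        ((y - b) * Real.exp (-a * (y - b) ^ 2)) y := by
      have := (h1.exp).const_mul (-(1 / (2 * a)))
      exact this.congr_deriv (by field_simp <;> ring)
    have := (hasDerivAt_Phi y).mul h2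
    exact this
  have i1 : Integrable (fun y : ℝ => ((Real.sqrt (2 * Real.pi))⁻¹ * Real.exp (-(y ^ 2) / 2)) *
      (-(1 / (2 * a)) * Real.exp (-a * (y - b) ^ 2))) := by
    apply (((integrable_gauss_prod ha b).const_mul
      ((Real.sqrt (2 * Real.pi))⁻¹ * -(1 / (2 * a)))).congr)
    refine Filter.Eventually.of_forall fun y => ?_
    ring
  have i2 : Integrable (fun y : ℝ => Phi y * ((y - b) * Real.exp (-a * (y - b) ^ 2))) := by
    apply Integrable.mono (integrable_mul_gauss_shift ha b)
    · exact (continuous_Phi.mul (by continuity)).aestronglyMeasurable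
    · refine Filter.Eventually.of_forall fun y => ?_
      rw [Real.norm_eq_abs, Real.norm_eq_abs, abs_mul]
      have := abs_of_nonneg (Phi_nonneg y)
      nlinarith [Phi_nonneg y, Phi_le_one y, abs_nonneg ((y - b) * Real.exp (-a * (y - b) ^ 2))]
  have iH' : Integrable H' := i1.add i2
  have hbound : ∀ y : ℝ, ‖H y‖ ≤ (1 / (2 * a)) * Real.exp (-a * (y - b) ^ 2) := by
    intro y
    rw [hHdef]
    rw [Real.norm_eq_abs, abs_mul, abs_of_nonneg (Phi_nonneg y), abs_mul, abs_neg, abs_of_nonneg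
      (by positivity : (0:ℝ) ≤ 1 / (2 * a)), abs_of_nonneg (Real.exp_pos _).le]
    nlinarith [Phi_nonneg y, Phi_le_one y, Real.exp_pos (-a * (y - b) ^ 2),
      mul_pos (by positivity : (0:ℝ) < 1 / (2 * a)) (Real.exp_pos (-a * (y - b) ^ 2))]
  have hBs := (tendsto_gauss_shift ha b).const_mul (1 / (2 * a))
  rw [mul_zero] at hBs
  have hHbot : Filter.Tendsto H atBot (nhds 0) :=
    squeeze_zero_norm hbound (hBs.mono_left le_sup_left)
  have hHtop : Filter.Tendsto H atTop (nhds 0) :=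
    squeeze_zero_norm hbound (hBs.mono_left le_sup_right)
  have e1 : ∫ y in Set.Iic (0:ℝ), H' y = H 0 - 0 :=
    MeasureTheory.integral_Iic_of_hasDerivAt_of_tendsto' (fun y _ => hH y)
      iH'.integrableOn hHbot
  have e2 : ∫ y in Set.Ioi (0:ℝ), H' y = 0 - H 0 :=
    MeasureTheory.integral_Ioi_of_hasDerivAt_of_tendsto' (fun y _ => hH y)
      iH'.integrableOn hHtop
  have e3 : ∫ y : ℝ, H' y = 0 := by
    rw [← intervalIntegral.integral_Iic_add_Ioi iH'.integrableOn iH'.integrableOn, e1, e2]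
    ring
  rw [hH'def] at e3
  rw [MeasureTheory.integral_add i1 i2] at e3
  have e4 : ∫ y : ℝ, ((Real.sqrt (2 * Real.pi))⁻¹ * Real.exp (-(y ^ 2) / 2)) *
      (-(1 / (2 * a)) * Real.exp (-a * (y - b) ^ 2)) =
      -(1 / (2 * a)) * ∫ y : ℝ, ((Real.sqrt (2 * Real.pi))⁻¹ * Real.exp (-(y ^ 2) / 2)) *
        Real.exp (-a * (y - b) ^ 2) := by
    rw [← MeasureTheory.integral_const_mul]
    congr 1
    funext y
    ring
  rw [e4] at e3
  linarith [e3]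

lemma final_alg (aa bb E P p q r s : ℝ) (hp : p ≠ 0) (hq : q ≠ 0) (hr : r ≠ 0) (hs : s ≠ 0)
    (haa : aa ≠ 0) (hq2 : q * q = 2) (hs2 : s * s = 2 * aa + 1) :
    1 / (2 * p) * (q * p * bb * (p / r * P) +
        q * p * (1 / (2 * aa) * ((q * p)⁻¹ * (q * p / s * E))) + q * p / s * E) =
      q * s / (4 * aa) * E + bb * p / (q * r) * P := by
  field_simp
  ring_nf
  linear_combination (8 * p * bb * P * aa * s) * hq2 - (4 * q ^ 2 * r * E) * hs2

theorem stmt3 (a b : ℝ) (ha : 0 < a) :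
    (1 / (2 * Real.sqrt Real.pi)) *
        ∫ l2 : ℝ, ∫ l1 in Set.Iic l2,
          Real.exp (-(l1 ^ 2) / 2) * Real.exp (-a * (l2 - b) ^ 2) * (l2 - l1) =
      Real.sqrt (4 * a + 2) / (4 * a) * Real.exp (-a * b ^ 2 / (2 * a + 1)) +
        b * Real.sqrt Real.pi / Real.sqrt (2 * a) *
          Phi (b * Real.sqrt (2 * a) / Real.sqrt (2 * a + 1)) := by
  have step1 : (∫ l2 : ℝ, ∫ l1 in Set.Iic l2,
      Real.exp (-(l1 ^ 2) / 2) * Real.exp (-a * (l2 - b) ^ 2) * (l2 - l1)) =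
      ∫ y : ℝ, (Real.sqrt (2 * Real.pi) * b) * (Phi y * Real.exp (-a * (y - b) ^ 2)) +
        (Real.sqrt (2 * Real.pi) * (Phi y * ((y - b) * Real.exp (-a * (y - b) ^ 2))) +
          Real.exp (-(y ^ 2) / 2) * Real.exp (-a * (y - b) ^ 2)) := by
    congr 1
    funext y
    rw [inner_int y (Real.exp (-a * (y - b) ^ 2))]
    ring
  have iPhiE : Integrable (fun y : ℝ => Phi y * Real.exp (-a * (y - b) ^ 2)) := by
    apply Integrable.mono (integrable_gauss_shift ha b)
    · exact (continuous_Phi.mul (by continuity)).aestronglyMeasurable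
    · refine Filter.Eventually.of_forall fun y => ?_
      rw [Real.norm_eq_abs, Real.norm_eq_abs,
        abs_of_nonneg (mul_nonneg (Phi_nonneg y) (Real.exp_pos _).le),
        abs_of_nonneg (Real.exp_pos _).le]
      nlinarith [Phi_nonneg y, Phi_le_one y, Real.exp_pos (-a * (y - b) ^ 2)]
  have i2 : Integrable (fun y : ℝ => Phi y * ((y - b) * Real.exp (-a * (y - b) ^ 2))) := by
    apply Integrable.mono (integrable_mul_gauss_shift ha b)
    · exact (continuous_Phi.mul (by continuity)).aestronglyMeasurable
    · refine Filter.Eventually.of_forall fun y => ?_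
      rw [Real.norm_eq_abs, Real.norm_eq_abs, abs_mul]
      nlinarith [Phi_nonneg y, Phi_le_one y, abs_of_nonneg (Phi_nonneg y),
        abs_nonneg ((y - b) * Real.exp (-a * (y - b) ^ 2))]
  have step2 : (∫ y : ℝ, (Real.sqrt (2 * Real.pi) * b) * (Phi y * Real.exp (-a * (y - b) ^ 2)) +
        (Real.sqrt (2 * Real.pi) * (Phi y * ((y - b) * Real.exp (-a * (y - b) ^ 2))) +
          Real.exp (-(y ^ 2) / 2) * Real.exp (-a * (y - b) ^ 2))) =
      (Real.sqrt (2 * Real.pi) * b) * (∫ y : ℝ, Phi y * Real.exp (-a * (y - b) ^ 2)) +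
        Real.sqrt (2 * Real.pi) * (∫ y : ℝ, Phi y * ((y - b) * Real.exp (-a * (y - b) ^ 2))) +
          ∫ y : ℝ, Real.exp (-(y ^ 2) / 2) * Real.exp (-a * (y - b) ^ 2) := by
    have eA : (∫ y : ℝ, (Real.sqrt (2 * Real.pi) * b) * (Phi y * Real.exp (-a * (y - b) ^ 2)) +
        (Real.sqrt (2 * Real.pi) * (Phi y * ((y - b) * Real.exp (-a * (y - b) ^ 2))) +
          Real.exp (-(y ^ 2) / 2) * Real.exp (-a * (y - b) ^ 2))) =
        (∫ y : ℝ, (Real.sqrt (2 * Real.pi) * b) * (Phi y * Real.exp (-a * (y - b) ^ 2))) +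
        ∫ y : ℝ, (Real.sqrt (2 * Real.pi) * (Phi y * ((y - b) * Real.exp (-a * (y - b) ^ 2))) +
          Real.exp (-(y ^ 2) / 2) * Real.exp (-a * (y - b) ^ 2)) :=
      MeasureTheory.integral_add (iPhiE.const_mul _)
        ((i2.const_mul _).add (integrable_gauss_prod ha b))
    have eB : (∫ y : ℝ, (Real.sqrt (2 * Real.pi) *
          (Phi y * ((y - b) * Real.exp (-a * (y - b) ^ 2))) +
          Real.exp (-(y ^ 2) / 2) * Real.exp (-a * (y - b) ^ 2))) =
        (∫ y : ℝ, Real.sqrt (2 * Real.pi) * (Phi y * ((y - b) * Real.exp (-a * (y - b) ^ 2)))) +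
        ∫ y : ℝ, Real.exp (-(y ^ 2) / 2) * Real.exp (-a * (y - b) ^ 2) :=
      MeasureTheory.integral_add (i2.const_mul _) (integrable_gauss_prod ha b)
    rw [eA, eB, MeasureTheory.integral_const_mul, MeasureTheory.integral_const_mul]
    ring
  have v1 : (∫ y : ℝ, Phi y * Real.exp (-a * (y - b) ^ 2)) =
      Real.sqrt (Real.pi / a) * Phi (b * Real.sqrt (2 * a) / Real.sqrt (2 * a + 1)) := by
    rw [F_shift ha b, F_eq ha b, mul_div_assoc]
  have vphi : (∫ y : ℝ, ((Real.sqrt (2 * Real.pi))⁻¹ * Real.exp (-(y ^ 2) / 2)) *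
      Real.exp (-a * (y - b) ^ 2)) = (Real.sqrt (2 * Real.pi))⁻¹ *
        (Real.sqrt (2 * Real.pi / (2 * a + 1)) * Real.exp (-a * b ^ 2 / (2 * a + 1))) := by
    simp_rw [mul_assoc]
    rw [MeasureTheory.integral_const_mul, gauss_prod ha b]
  have v2 : (∫ y : ℝ, Phi y * ((y - b) * Real.exp (-a * (y - b) ^ 2))) =
      (1 / (2 * a)) * ((Real.sqrt (2 * Real.pi))⁻¹ *
        (Real.sqrt (2 * Real.pi / (2 * a + 1)) * Real.exp (-a * b ^ 2 / (2 * a + 1)))) := by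
    rw [parts ha b, vphi]
  rw [step1, step2, v1, v2, gauss_prod ha b]
  have h2 : Real.sqrt (2 * Real.pi) = Real.sqrt 2 * Real.sqrt Real.pi :=
    Real.sqrt_mul (by norm_num) _
  have h3 : Real.sqrt (2 * Real.pi / (2 * a + 1)) =
      Real.sqrt 2 * Real.sqrt Real.pi / Real.sqrt (2 * a + 1) := by
    rw [Real.sqrt_div (by positivity), h2]
  have h4 : Real.sqrt (Real.pi / a) = Real.sqrt Real.pi / Real.sqrt a :=
    Real.sqrt_div Real.pi_pos.le _
  have h5 : Real.sqrt (2 * a) = Real.sqrt 2 * Real.sqrt a :=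
    Real.sqrt_mul (by norm_num) _
  have h6 : Real.sqrt (4 * a + 2) = Real.sqrt 2 * Real.sqrt (2 * a + 1) := by
    rw [← Real.sqrt_mul (by norm_num : (0:ℝ) ≤ 2), show (2:ℝ) * (2 * a + 1) = 4 * a + 2 by ring]
  have hp : Real.sqrt Real.pi ≠ 0 := by positivity
  have hsa : Real.sqrt a ≠ 0 := by positivity
  have hs2 : Real.sqrt 2 ≠ 0 := by positivity
  have hs1 : Real.sqrt (2 * a + 1) ≠ 0 := by positivity
  have hss1 : Real.sqrt (2 * a + 1) * Real.sqrt (2 * a + 1) = 2 * a + 1 :=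
    Real.mul_self_sqrt (by positivity)
  have hss2 : Real.sqrt 2 * Real.sqrt 2 = 2 := Real.mul_self_sqrt (by norm_num)
  have hssp : Real.sqrt Real.pi * Real.sqrt Real.pi = Real.pi :=
    Real.mul_self_sqrt Real.pi_pos.le
  rw [h2, h3, h4, h5, h6]
  have haa : a ≠ 0 := ne_of_gt ha
  exact final_alg a b (Real.exp (-a * b ^ 2 / (2 * a + 1)))
    (Phi (b * (Real.sqrt 2 * Real.sqrt a) / Real.sqrt (2 * a + 1)))
    (Real.sqrt Real.pi) (Real.sqrt 2) (Real.sqrt a) (Real.sqrt (2 * a + 1))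
    hp hs2 hsa hs1 haa hss2 hss1
end
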